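/- Lemma 2 (MMSE denoiser, scalar form): Let S and N be square-integrable real random variables on a probability space, with S and N independent, E[N] = 0 and E[N²] = v > 0. Set Y = S + N, let Ŝ = E[S | Y] be the conditional expectation of S given the σ-algebra generated by Y, and let mmse = E[(Ŝ − S)²]. Then: (a) E[(Y − S)·Ŝ] = mmse and E[(Y − S)·Y] = v, so the coefficient a := E[(Y − S)·Ŝ]/E[(Y − S)·Y] equals mmse/v; (b) if 0 < mmse < v, then the extrinsic estimate s_ext := (v/(v − mmse))·(Ŝ − (mmse/v)·Y) satisfies E[(s_ext − S)·(Y − S)] = 0 and E[(s_ext − S)²] = v·mmse/(v − mmse). -/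

import Mathlib

open MeasureTheory ProbabilityTheory

lemma aux_integrable_mul {Ω : Type*} [MeasurableSpace Ω] {μ : Measure Ω} {f g : Ω → ℝ}
    (hf : MemLp f 2 μ) (hg : MemLp g 2 μ) : Integrable (fun ω => f ω * g ω) μ := by
  refine Integrable.mono' ((hf.integrable_sq.add hg.integrable_sq).div_const 2)
    (hf.1.mul hg.1) ?_
  filter_upwards with ω
  simp only [Pi.add_apply, Real.norm_eq_abs, abs_mul]
  nlinarith [sq_nonneg (|f ω| - |g ω|), sq_abs (f ω), sq_abs (g ω)]

lemma aux_memLp_condexp {Ω : Type*} {m : MeasurableSpace Ω} [m0 : MeasurableSpace Ω]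
    (hm : m ≤ m0) (μ : Measure Ω) [IsProbabilityMeasure μ] {f : Ω → ℝ}
    (hf : MemLp f 2 μ) :
    MemLp (μ[f|m]) 2 μ := by
  set F : Ω →₂[μ] ℝ := hf.toLp f with hF
  have hg : (condExpL2 ℝ ℝ hm F : Ω → ℝ) =ᵐ[μ] μ[f|m] := by
    refine ae_eq_condExp_of_forall_setIntegral_eq hm (hf.integrable one_le_two)
      (fun s _ _ => (integrable_condExpL2_of_isFiniteMeasure hm).integrableOn)
      (fun s hs hμs => ?_) (aestronglyMeasurable_condExpL2 hm _)
    rw [integral_condExpL2_eq hm F hs hμs.ne]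
    exact setIntegral_congr_ae (hm s hs) ((hf.coeFn_toLp).mono fun x hx _ => hx)
  exact (Lp.memLp _).ae_eq hg

lemma aux_integral_three {Ω : Type*} [MeasurableSpace Ω] {μ : Measure Ω} {f g h : Ω → ℝ}
    (a b c : ℝ) (hf : Integrable f μ) (hg : Integrable g μ) (hh : Integrable h μ) :
    ∫ ω, (a * f ω + b * g ω + c * h ω) ∂μ
      = a * ∫ ω, f ω ∂μ + b * ∫ ω, g ω ∂μ + c * ∫ ω, h ω ∂μ := by
  have hfg : Integrable (fun ω => a * f ω + b * g ω) μ :=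
    (hf.const_mul a).add (hg.const_mul b)
  have haf : Integrable (fun ω => a * f ω) μ := hf.const_mul a
  have hbg : Integrable (fun ω => b * g ω) μ := hg.const_mul b
  have hch : Integrable (fun ω => c * h ω) μ := hh.const_mul c
  rw [integral_add hfg hch, integral_add haf hbg,
    integral_const_mul, integral_const_mul, integral_const_mul]

/-- Lemma 2 (MMSE denoiser, scalar form): identities for the MMSE denoiser
`Ŝ = E[S | Y]` of `S` from `Y = S + N`, with `S ⟂ N`, `E[N] = 0`, `E[N²] = v > 0`,
and the orthogonality/variance formulas for the extrinsic estimate. -/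
theorem stmt11 {Ω : Type*} [MeasurableSpace Ω] (μ : Measure Ω)
    [IsProbabilityMeasure μ]
    (S N : Ω → ℝ) (v : ℝ)
    (hSmeas : Measurable S) (hNmeas : Measurable N)
    (hS2 : MemLp S 2 μ) (hN2 : MemLp N 2 μ)
    (hindep : IndepFun S N μ)
    (hN0 : ∫ ω, N ω ∂μ = 0)
    (hNv : ∫ ω, (N ω) ^ 2 ∂μ = v) (hv : 0 < v)
    (Y : Ω → ℝ) (hY : Y = fun ω => S ω + N ω)
    (Shat : Ω → ℝ)
    (hShat : Shat = MeasureTheory.condExp (MeasurableSpace.comap Y inferInstance) μ S)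
    (mmse : ℝ) (hmmse : mmse = ∫ ω, (Shat ω - S ω) ^ 2 ∂μ) :
    (∫ ω, (Y ω - S ω) * Shat ω ∂μ = mmse) ∧
    (∫ ω, (Y ω - S ω) * Y ω ∂μ = v) ∧
    ((∫ ω, (Y ω - S ω) * Shat ω ∂μ) / (∫ ω, (Y ω - S ω) * Y ω ∂μ) = mmse / v) ∧
    (0 < mmse → mmse < v →
      ∀ sExt : Ω → ℝ,
        sExt = (fun ω => (v / (v - mmse)) * (Shat ω - (mmse / v) * Y ω)) →
        (∫ ω, (sExt ω - S ω) * (Y ω - S ω) ∂μ = 0) ∧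
        (∫ ω, (sExt ω - S ω) ^ 2 ∂μ = v * mmse / (v - mmse))) := by
  have hYmeas : Measurable Y := by rw [hY]; exact hSmeas.add hNmeas
  have hm : MeasurableSpace.comap Y inferInstance ≤ ‹MeasurableSpace Ω› :=
    hYmeas.comap_le
  have hY2 : MemLp Y 2 μ := by rw [hY]; exact hS2.add hN2
  have hShat2 : MemLp Shat 2 μ := by rw [hShat]; exact aux_memLp_condexp hm μ hS2
  have hShatSM : StronglyMeasurable[MeasurableSpace.comap Y inferInstance] Shat := by
    rw [hShat]; exact stronglyMeasurable_condExp
  have hYm : Measurable[MeasurableSpace.comap Y inferInstance] Y :=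
    measurable_iff_comap_le.2 le_rfl
  have hYSM : StronglyMeasurable[MeasurableSpace.comap Y inferInstance] Y :=
    hYm.stronglyMeasurable
  -- independence: E[S N] = 0
  have hSN : ∫ ω, S ω * N ω ∂μ = 0 := by
    have h := hindep.integral_mul_eq_mul_integral hS2.1 hN2.1
    have h2 : (fun ω => S ω * N ω) = S * N := rfl
    rw [show (∫ ω, S ω * N ω ∂μ) = integral μ (S * N) from rfl, h, hN0, mul_zero]
  -- tower identities
  have htow1 : ∫ ω, Y ω * Shat ω ∂μ = ∫ ω, Y ω * S ω ∂μ := by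
    have hmul : μ[(Y * S : Ω → ℝ)|MeasurableSpace.comap Y inferInstance]
        =ᵐ[μ] Y * μ[S|MeasurableSpace.comap Y inferInstance] :=
      condExp_mul_of_stronglyMeasurable_left hYSM
        (by exact aux_integrable_mul hY2 hS2)
        (hS2.integrable one_le_two)
    calc ∫ ω, Y ω * Shat ω ∂μ
        = ∫ ω, (Y * μ[S|MeasurableSpace.comap Y inferInstance]) ω ∂μ := by rw [hShat]; rfl
      _ = ∫ ω, (μ[(Y * S : Ω → ℝ)|MeasurableSpace.comap Y inferInstance]) ω ∂μ :=
          (integral_congr_ae hmul.symm)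
      _ = ∫ ω, (Y * S) ω ∂μ := integral_condExp hm
      _ = ∫ ω, Y ω * S ω ∂μ := rfl
  have htow2 : ∫ ω, Shat ω * S ω ∂μ = ∫ ω, Shat ω * Shat ω ∂μ := by
    have hmul : μ[(Shat * S : Ω → ℝ)|MeasurableSpace.comap Y inferInstance]
        =ᵐ[μ] Shat * μ[S|MeasurableSpace.comap Y inferInstance] :=
      condExp_mul_of_stronglyMeasurable_left hShatSM
        (by exact aux_integrable_mul hShat2 hS2)
        (hS2.integrable one_le_two)
    calc ∫ ω, Shat ω * S ω ∂μ
        = ∫ ω, (Shat * S : Ω → ℝ) ω ∂μ := rfl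
      _ = ∫ ω, (μ[(Shat * S : Ω → ℝ)|MeasurableSpace.comap Y inferInstance]) ω ∂μ :=
          (integral_condExp hm).symm
      _ = ∫ ω, (Shat * μ[S|MeasurableSpace.comap Y inferInstance]) ω ∂μ :=
          integral_congr_ae hmul
      _ = ∫ ω, Shat ω * Shat ω ∂μ := by rw [hShat]; rfl
  -- integrability facts
  have hiSS : Integrable (fun ω => S ω * S ω) μ := aux_integrable_mul hS2 hS2
  have hiShS : Integrable (fun ω => Shat ω * S ω) μ := aux_integrable_mul hShat2 hS2
  have hiShSh : Integrable (fun ω => Shat ω * Shat ω) μ := aux_integrable_mul hShat2 hShat2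
  have hiSN : Integrable (fun ω => S ω * N ω) μ := aux_integrable_mul hS2 hN2
  have hiNN : Integrable (fun ω => N ω * N ω) μ := aux_integrable_mul hN2 hN2
  -- mmse = ∫ S*S − ∫ Shat*Shat
  have hmmse' : mmse = ∫ ω, S ω * S ω ∂μ - ∫ ω, Shat ω * Shat ω ∂μ := by
    have hexp : (fun ω => (Shat ω - S ω) ^ 2)
        = fun ω => (1 : ℝ) * (Shat ω * Shat ω) + (-2) * (Shat ω * S ω) + 1 * (S ω * S ω) := by
      funext ω; ring
    rw [hmmse, hexp, aux_integral_three 1 (-2) 1 hiShSh hiShS hiSS, htow2]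
    ring
  -- ∫ N * Shat = mmse
  have hNSh : ∫ ω, N ω * Shat ω ∂μ = mmse := by
    have hsplit : (fun ω => N ω * Shat ω)
        = fun ω => (1 : ℝ) * (Y ω * Shat ω) + (-1) * (Shat ω * S ω) + 0 * (S ω * S ω) := by
      funext ω; rw [hY]; ring
    rw [hsplit, aux_integral_three 1 (-1) 0 (aux_integrable_mul hY2 hShat2) hiShS hiSS,
      htow1, htow2]
    have hYS : ∫ ω, Y ω * S ω ∂μ = ∫ ω, S ω * S ω ∂μ + ∫ ω, S ω * N ω ∂μ := by
      have h3 : (fun ω => Y ω * S ω)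
          = fun ω => (1 : ℝ) * (S ω * S ω) + 1 * (S ω * N ω) + 0 * (N ω * N ω) := by
        funext ω; rw [hY]; ring
      rw [h3, aux_integral_three 1 1 0 hiSS hiSN hiNN]; ring
    rw [hYS, hSN, hmmse']; ring
  have hNsq : ∫ ω, N ω * N ω ∂μ = v := by
    rw [← hNv]
    exact integral_congr_ae (Filter.Eventually.of_forall fun ω => (pow_two (N ω)).symm)
  -- part (a) first identity
  have ha1 : ∫ ω, (Y ω - S ω) * Shat ω ∂μ = mmse := by
    have h4 : (fun ω => (Y ω - S ω) * Shat ω) = fun ω => N ω * Shat ω := by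
      funext ω; rw [hY]; ring
    rw [h4, hNSh]
  -- part (a) second identity
  have ha2 : ∫ ω, (Y ω - S ω) * Y ω ∂μ = v := by
    have h5 : (fun ω => (Y ω - S ω) * Y ω)
        = fun ω => (1 : ℝ) * (S ω * N ω) + 1 * (N ω * N ω) + 0 * (S ω * S ω) := by
      funext ω; rw [hY]; ring
    rw [h5, aux_integral_three 1 1 0 hiSN hiNN hiSS, hSN, hNsq]
    ring
  refine ⟨ha1, ha2, by rw [ha1, ha2], ?_⟩
  -- part (b)
  intro hm0 hmv sExt hsExt
  have hvne : v ≠ 0 := ne_of_gt hv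
  have hvmne : v - mmse ≠ 0 := ne_of_gt (sub_pos.mpr hmv)
  -- key pointwise identity
  have hkey : ∀ ω, sExt ω - S ω
      = (v / (v - mmse)) * (Shat ω - S ω) - (v / (v - mmse)) * (mmse / v) * N ω := by
    intro ω
    rw [hsExt, hY]
    field_simp
    ring
  have hSh_S_N : ∫ ω, (Shat ω - S ω) * N ω ∂μ = mmse := by
    have h6 : (fun ω => (Shat ω - S ω) * N ω)
        = fun ω => (1 : ℝ) * (N ω * Shat ω) + (-1) * (S ω * N ω) + 0 * (N ω * N ω) := by
      funext ω; ring
    rw [h6, aux_integral_three 1 (-1) 0 (aux_integrable_mul hN2 hShat2) hiSN hiNN,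
      hNSh, hSN]
    ring
  have hSh_S_sq : ∫ ω, (Shat ω - S ω) * (Shat ω - S ω) ∂μ = mmse := by
    rw [hmmse]
    exact integral_congr_ae (Filter.Eventually.of_forall fun ω => (pow_two _).symm)
  have hiD : Integrable (fun ω => (Shat ω - S ω) * (Shat ω - S ω)) μ :=
    aux_integrable_mul (hShat2.sub hS2) (hShat2.sub hS2)
  have hiDN : Integrable (fun ω => (Shat ω - S ω) * N ω) μ :=
    aux_integrable_mul (hShat2.sub hS2) hN2
  constructor
  · -- orthogonality
    have h7 : (fun ω => (sExt ω - S ω) * (Y ω - S ω))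
        = fun ω => (v / (v - mmse)) * ((Shat ω - S ω) * N ω)
            + (-((v / (v - mmse)) * (mmse / v))) * (N ω * N ω)
            + 0 * (S ω * S ω) := by
      funext ω; rw [show sExt ω - S ω = _ from hkey ω, hY]; ring
    rw [h7, aux_integral_three _ _ _ hiDN hiNN hiSS, hSh_S_N, hNsq]
    field_simp
    ring
  · -- variance
    have h8 : (fun ω => (sExt ω - S ω) ^ 2)
        = fun ω => ((v / (v - mmse)) ^ 2 : ℝ) * ((Shat ω - S ω) * (Shat ω - S ω))
            + (-(2 * (v / (v - mmse)) ^ 2 * (mmse / v))) * ((Shat ω - S ω) * N ω)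
            + ((v / (v - mmse)) ^ 2 * (mmse / v) ^ 2) * (N ω * N ω) := by
      funext ω; rw [show sExt ω - S ω = _ from hkey ω]; ring
    rw [h8, aux_integral_three _ _ _ hiD hiDN hiNN, hSh_S_sq, hSh_S_N, hNsq]
    field_simp
    ring
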